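/- For u(z) = log|z₁| on the unit ball B ⊂ ℂ², the volume of the sublevel set is |{u < log R}| = π²(R² − R⁴/2) for 0 < R < 1, and consequently the Lelong number of the Schwarz symmetrization at the origin equals 2: ν_û(0) = lim_{R→0} 4 log R / (log(R² − R⁴/2) + log 2) = 2. -/

import Mathlib

open MeasureTheory Metric Filter Topology
open scoped ENNReal Topology

noncomputable section

abbrev Cn (n : ℕ) := EuclideanSpace ℂ (Fin n)
abbrev Rn (N : ℕ) := EuclideanSpace ℝ (Fin N)

instance (n : ℕ) : MeasurableSpace (Cn n) := MeasurableSpace.comap WithLp.ofLp MeasurableSpace.pi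
instance (n : ℕ) : BorelSpace (Cn n) := PiLp.borelSpace 2
instance (n : ℕ) : MeasureSpace (Cn n) := ⟨(MeasureTheory.Measure.pi fun _ => volume).map (MeasurableEquiv.toLp 2 (Fin n → ℂ))⟩

/-- Circle mean of the truncation `max f (-m)` of an `EReal`-valued function. -/
def circleTruncMean (f : ℂ → EReal) (c : ℂ) (r : ℝ) (m : ℕ) : ℝ :=
  (2 * Real.pi)⁻¹ *
    ∫ θ in (0:ℝ)..(2 * Real.pi),
      (max (f (c + (r : ℂ) * Complex.exp ((θ : ℂ) * Complex.I))) ((-(m : ℝ) : ℝ) : EReal)).toReal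

/-- Circle mean of an `EReal`-valued function, as the decreasing limit of truncated means. -/
def circleMean (f : ℂ → EReal) (c : ℂ) (r : ℝ) : EReal :=
  ⨅ m : ℕ, ((circleTruncMean f c r m : ℝ) : EReal)

/-- Subharmonicity (EReal-valued, sub-mean value property) on a subset of ℂ. -/
def SubharmonicOn' (f : ℂ → EReal) (s : Set ℂ) : Prop :=
  UpperSemicontinuousOn f s ∧
    ∀ c r, 0 < r → closedBall c r ⊆ s → f c ≤ circleMean f c r

/-- Plurisubharmonicity: upper semicontinuity plus the sub-mean value property
along every complex line. -/
def PlurisubharmonicOn {n : ℕ} (u : Cn n → EReal) (s : Set (Cn n)) : Prop :=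
  UpperSemicontinuousOn u s ∧
    ∀ (z w : Cn n) (c : ℂ) (r : ℝ), 0 < r →
      (∀ l : ℂ, dist l c ≤ r → z + l • w ∈ s) →
      u (z + c • w) ≤ circleMean (fun l => u (z + l • w)) c r

/-- `S¹`-invariance of `u` on `s` : `u (e^{iθ} z) = u z`. -/
def S1InvariantOn {n : ℕ} (u : Cn n → EReal) (s : Set (Cn n)) : Prop :=
  ∀ (θ : ℝ), ∀ z ∈ s, u (Complex.exp ((θ : ℂ) * Complex.I) • z) = u z

/-- The Lelong number of `u` at `x`, as `lim_{r→0} (sup_{B_r(x)} u)/log r`. -/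
def lelong {n : ℕ} (u : Cn n → EReal) (x : Cn n) : ℝ :=
  liminf (fun r : ℝ => (⨆ w ∈ ball x r, u w).toReal / Real.log r) (𝓝[>] (0:ℝ))

/-- The exponential of an extended real number, valued in `ℝ≥0∞`. -/
def expE (x : EReal) : ℝ≥0∞ :=
  if x = ⊥ then 0 else if x = ⊤ then ⊤ else ENNReal.ofReal (Real.exp x.toReal)

/-- The complex singularity exponent of `u` over a set `s`:
`sup { c ≥ 0 : e^{-2cu} ∈ L¹(s) }`. -/
def cseOn {n : ℕ} (u : Cn n → EReal) (s : Set (Cn n)) : ℝ :=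
  sSup {c : ℝ | 0 ≤ c ∧ ∫⁻ x in s, expE ((((-2 : ℝ) * c : ℝ) : EReal) * u x) < ⊤}

/-- The complex singularity exponent of `u` at a point `x`:
`sup { c ≥ 0 : e^{-2cu} ∈ L¹(U) for some neighbourhood U of x }`. -/
def csePt {n : ℕ} (u : Cn n → EReal) (x : Cn n) : ℝ :=
  sSup {c : ℝ | 0 ≤ c ∧ ∃ U ∈ 𝓝 x, ∫⁻ y in U, expE ((((-2 : ℝ) * c : ℝ) : EReal) * u y) < ⊤}

/-- The integrability index: the inverse of the complex singularity exponent. -/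
def iota {n : ℕ} (u : Cn n → EReal) (x : Cn n) : ℝ := (csePt u x)⁻¹

/-- The increasing rearrangement `u_*(s) = inf { t : |{u < t}| > s }` (real-valued case). -/
def rearr {N : ℕ} (u : Rn N → ℝ) (Ω : Set (Rn N)) (s : ℝ) : ℝ :=
  sInf {t : ℝ | ENNReal.ofReal s < volume {x ∈ Ω | u x < t}}

/-- The essential supremum of a real-valued function on `Ω`. -/
def essSupR {N : ℕ} (u : Rn N → ℝ) (Ω : Set (Rn N)) : ℝ :=
  sInf {t : ℝ | volume {x ∈ Ω | t < u x} = 0}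

/-- The increasing rearrangement on `[0,|Ω|]`, equal to `ess sup u` at `s = |Ω|`. -/
def rearrFull {N : ℕ} (u : Rn N → ℝ) (Ω : Set (Rn N)) (s : ℝ) : ℝ :=
  if s < (volume Ω).toReal then rearr u Ω s else essSupR u Ω

/-- The increasing rearrangement (EReal-valued case on ℂⁿ). -/
def rearrE {n : ℕ} (u : Cn n → EReal) (Ω : Set (Cn n)) (s : ℝ) : EReal :=
  sInf ((fun t : ℝ => (t : EReal)) ''
    {t : ℝ | ENNReal.ofReal s < volume {x ∈ Ω | u x < (t : EReal)}})

/-- The Schwarz symmetrization `û(x) = u_*(a_N |x|^N)` (real-valued case). -/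
def schwarz {N : ℕ} (u : Rn N → ℝ) (Ω : Set (Rn N)) (x : Rn N) : ℝ :=
  rearr u Ω ((volume (ball (0 : Rn N) ‖x‖)).toReal)

/-- The Schwarz symmetrization `û(x) = u_*(a_{2n} |x|^{2n})` (EReal-valued case on ℂⁿ). -/
def schwarzE {n : ℕ} (u : Cn n → EReal) (Ω : Set (Cn n)) (x : Cn n) : EReal :=
  rearrE u Ω ((volume (ball (0 : Cn n) ‖x‖)).toReal)


/-- The function `u(z) = log|z₁|` on `ℂ²` (with value `−∞` on `{z₁ = 0}`). -/
def u18 : Cn 2 → EReal := fun z =>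
  if z 0 = 0 then (⊥ : EReal) else ((Real.log (‖z 0‖) : ℝ) : EReal)

lemma volAux {ρ R : ℝ} (hR : 0 < R) (hRρ : R ≤ ρ) :
    volume {z : Cn 2 | ‖z‖ < ρ ∧ ‖(z 0)‖ < R}
      = ENNReal.ofReal (Real.pi ^ 2 * (ρ ^ 2 * R ^ 2 - R ^ 4 / 2)) := by
  have hρ : 0 < ρ := lt_of_lt_of_le hR hRρ
  set T : Set (ℂ × ℂ) :=
    {p | ‖p.1‖ ^ 2 + ‖p.2‖ ^ 2 < ρ ^ 2 ∧ ‖p.1‖ < R} with hT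
  have hTm : MeasurableSet T := by
    apply MeasurableSet.inter
    · exact measurableSet_lt (((continuous_norm.measurable.comp measurable_fst).pow_const 2).add
        ((continuous_norm.measurable.comp measurable_snd).pow_const 2)) measurable_const
    · exact measurableSet_lt (continuous_norm.measurable.comp measurable_fst) measurable_const
  have hpre : {z : Cn 2 | ‖z‖ < ρ ∧ ‖(z 0)‖ < R}
      = WithLp.ofLp ⁻¹' ((MeasurableEquiv.piFinTwo (fun _ : Fin 2 => ℂ)) ⁻¹' T) := by
    ext z
    simp only [Set.mem_setOf_eq, Set.mem_preimage, MeasurableEquiv.piFinTwo_apply, hT]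
    constructor
    · rintro ⟨h1, h2⟩
      refine ⟨?_, h2⟩
      rw [EuclideanSpace.norm_eq, Real.sqrt_lt' hρ, Fin.sum_univ_two] at h1
      simpa using h1
    · rintro ⟨h1, h2⟩
      refine ⟨?_, h2⟩
      rw [EuclideanSpace.norm_eq, Real.sqrt_lt' hρ, Fin.sum_univ_two]
      simpa using h1
  have hmp := MeasureTheory.measurePreserving_piFinTwo (fun _ : Fin 2 => (volume : Measure ℂ))
  rw [hpre]
  rw [show (volume : Measure (Cn 2))
      = (Measure.pi fun _ => volume).map (MeasurableEquiv.toLp 2 (Fin 2 → ℂ)) from rfl,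
    MeasurableEquiv.map_apply]
  refine Eq.trans (hmp.measure_preimage hTm.nullMeasurableSet) ?_
  rw [Measure.prod_apply hTm]
  set F : ℝ → ℝ := fun y => if y < R then Real.pi * (ρ ^ 2 - y ^ 2) else 0 with hF
  have hslice : ∀ w : ℂ, volume (Prod.mk w ⁻¹' T) = ENNReal.ofReal (F ‖w‖) := by
    intro w
    by_cases hw : ‖w‖ < R
    · have hc : (0:ℝ) < ρ ^ 2 - ‖w‖ ^ 2 := by
        have : ‖w‖ < ρ := lt_of_lt_of_le hw hRρ
        nlinarith [norm_nonneg w]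
      have hball : Prod.mk w ⁻¹' T = ball (0:ℂ) (Real.sqrt (ρ ^ 2 - ‖w‖ ^ 2)) := by
        ext z
        rw [mem_ball, dist_zero_right, Real.lt_sqrt (norm_nonneg z)]
        simp only [Set.mem_preimage, hT, Set.mem_setOf_eq]
        constructor
        · rintro ⟨h1, _⟩; linarith
        · intro h1; exact ⟨by linarith, hw⟩
      rw [hball, Complex.volume_ball]
      have : F ‖w‖ = Real.pi * (ρ ^ 2 - ‖w‖ ^ 2) := by
        rw [hF]; exact if_pos hw
      rw [this, ← ENNReal.ofReal_pow (Real.sqrt_nonneg _), Real.sq_sqrt hc.le,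
        ← ENNReal.ofReal_coe_nnreal, NNReal.coe_real_pi,
        ← ENNReal.ofReal_mul (by positivity), mul_comm]
    · have hempty : Prod.mk w ⁻¹' T = ∅ := by
        ext z; simp only [Set.mem_preimage, hT, Set.mem_setOf_eq, Set.mem_empty_iff_false,
          iff_false, not_and]
        intro _; exact hw
      rw [hempty]
      have : F ‖w‖ = 0 := by rw [hF]; exact if_neg hw
      rw [this]; simp
  simp_rw [hslice]
  have hind : (fun w : ℂ => F ‖w‖)
      = (ball (0:ℂ) R).indicator (fun w => Real.pi * (ρ ^ 2 - ‖w‖ ^ 2)) := by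
    funext w
    by_cases hw : ‖w‖ < R
    · show F ‖w‖ = _
      rw [hF, Set.indicator_of_mem (mem_ball_zero_iff.2 hw)]
      exact if_pos hw
    · show F ‖w‖ = _
      rw [hF, Set.indicator_of_notMem (fun h => hw (mem_ball_zero_iff.1 h))]
      exact if_neg hw
  have hint : Integrable (fun w : ℂ => F ‖w‖) := by
    rw [hind]
    rw [integrable_indicator_iff measurableSet_ball]
    have hcont : Continuous fun w : ℂ => Real.pi * (ρ ^ 2 - ‖w‖ ^ 2) := by fun_prop
    exact (hcont.continuousOn.integrableOn_compact (isCompact_closedBall 0 R)).mono_set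
      ball_subset_closedBall
  have hnn : 0 ≤ᶠ[ae (volume : Measure ℂ)] fun w : ℂ => F ‖w‖ := by
    refine Filter.Eventually.of_forall fun w => ?_
    show (0:ℝ) ≤ F ‖w‖
    by_cases hw : ‖w‖ < R
    · have he : F ‖w‖ = Real.pi * (ρ ^ 2 - ‖w‖ ^ 2) := if_pos hw
      rw [he]
      have h2 : ‖w‖ < ρ := lt_of_lt_of_le hw hRρ
      have h3 : (0:ℝ) < ρ ^ 2 - ‖w‖ ^ 2 := by nlinarith [norm_nonneg w]
      positivity
    · have he : F ‖w‖ = 0 := if_neg hw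
      rw [he]
  rw [← ofReal_integral_eq_lintegral_ofReal hint hnn]
  congr 1
  rw [integral_fun_norm_addHaar volume F]
  have hb1 : ((volume (ball (0:ℂ) 1)).toReal) = Real.pi := by
    rw [Complex.volume_ball]
    simp [ENNReal.toReal_mul, NNReal.coe_real_pi]
  rw [Complex.finrank_real_complex, measureReal_def, hb1]
  have hioi : ∫ y in Set.Ioi (0:ℝ), y ^ (2 - 1) • F y
      = ∫ y in (0:ℝ)..R, y * (Real.pi * (ρ ^ 2 - y ^ 2)) := by
    have h1 : (fun y : ℝ => y ^ (2-1) • F y)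
        = (Set.Iio R).indicator (fun y => y * (Real.pi * (ρ ^ 2 - y ^ 2))) := by
      funext y
      by_cases hy : y < R
      · show y ^ (2-1) • F y = _
        have he : F y = Real.pi * (ρ ^ 2 - y ^ 2) := if_pos hy
        rw [Set.indicator_of_mem (Set.mem_Iio.2 hy), he]
        simp [smul_eq_mul]
      · show y ^ (2-1) • F y = _
        have he : F y = 0 := if_neg hy
        rw [Set.indicator_of_notMem (fun h => hy (Set.mem_Iio.1 h)), he]
        simp
    rw [h1, MeasureTheory.setIntegral_indicator measurableSet_Iio, Set.Ioi_inter_Iio,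
      ← MeasureTheory.integral_Ioc_eq_integral_Ioo, ← intervalIntegral.integral_of_le hR.le]
  rw [hioi]
  have hval : ∫ y in (0:ℝ)..R, y * (Real.pi * (ρ ^ 2 - y ^ 2))
      = Real.pi * (ρ ^ 2 * R ^ 2 / 2 - R ^ 4 / 4) := by
    have : (fun y : ℝ => y * (Real.pi * (ρ ^ 2 - y ^ 2)))
        = fun y : ℝ => (Real.pi * ρ ^ 2) * y - Real.pi * y ^ 3 := by
      funext y; ring
    have i1 : IntervalIntegrable (fun y : ℝ => Real.pi * ρ ^ 2 * y) volume 0 R :=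
      (by fun_prop : Continuous fun y : ℝ => Real.pi * ρ ^ 2 * y).intervalIntegrable _ _
    have i2 : IntervalIntegrable (fun y : ℝ => Real.pi * y ^ 3) volume 0 R :=
      (by fun_prop : Continuous fun y : ℝ => Real.pi * y ^ 3).intervalIntegrable _ _
    rw [this, intervalIntegral.integral_sub i1 i2]
    have e1 : ∫ y in (0:ℝ)..R, Real.pi * ρ ^ 2 * y = Real.pi * ρ ^ 2 * (R ^ 2 / 2) := by
      rw [intervalIntegral.integral_const_mul]
      open intervalIntegral in rw [integral_id]
      ring
    have e2 : ∫ y in (0:ℝ)..R, Real.pi * y ^ 3 = Real.pi * (R ^ 4 / 4) := by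
      rw [intervalIntegral.integral_const_mul]
      open intervalIntegral in rw [integral_pow]
      norm_num
    rw [e1, e2]; ring
  rw [hval]
  simp only [smul_eq_mul, Nat.cast_ofNat]
  ring

lemma coord_le_norm (z : Cn 2) : ‖(z 0)‖ ≤ ‖z‖ := by
  rw [EuclideanSpace.norm_eq, Fin.sum_univ_two,
    Real.le_sqrt (norm_nonneg _) (by positivity)]
  nlinarith [norm_nonneg (z 1)]

lemma ballVol {r : ℝ} (hr : 0 < r) :
    volume (ball (0 : Cn 2) r) = ENNReal.ofReal (Real.pi ^ 2 * r ^ 4 / 2) := by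
  have h : ball (0 : Cn 2) r = {z : Cn 2 | ‖z‖ < r ∧ ‖(z 0)‖ < r} := by
    ext z
    simp only [mem_ball, dist_zero_right, Set.mem_setOf_eq]
    exact ⟨fun h => ⟨h, lt_of_le_of_lt (coord_le_norm z) h⟩, fun h => h.1⟩
  rw [h, volAux hr le_rfl]
  congr 1; ring

lemma sublevel {R : ℝ} (hR0 : 0 < R) (hR1 : R ≤ 1) :
    volume {z ∈ ball (0 : Cn 2) 1 | u18 z < ((Real.log R : ℝ) : EReal)}
      = ENNReal.ofReal (Real.pi ^ 2 * (R ^ 2 - R ^ 4 / 2)) := by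
  have h : {z ∈ ball (0 : Cn 2) 1 | u18 z < ((Real.log R : ℝ) : EReal)}
      = {z : Cn 2 | ‖z‖ < 1 ∧ ‖(z 0)‖ < R} := by
    ext z
    simp only [Set.mem_sep_iff, mem_ball, dist_zero_right, Set.mem_setOf_eq]
    constructor
    · rintro ⟨h1, h2⟩
      refine ⟨h1, ?_⟩
      by_cases hz : z 0 = 0
      · rw [hz]; simpa using hR0
      · simp only [u18, if_neg hz, EReal.coe_lt_coe_iff] at h2
        exact (Real.log_lt_log_iff (norm_pos_iff.mpr hz) hR0).1 h2
    · rintro ⟨h1, h2⟩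
      refine ⟨h1, ?_⟩
      by_cases hz : z 0 = 0
      · simp only [u18, if_pos hz]
        exact EReal.bot_lt_coe _
      · simp only [u18, if_neg hz, EReal.coe_lt_coe_iff]
        exact (Real.log_lt_log_iff (norm_pos_iff.mpr hz) hR0).2 h2
  rw [h, volAux hR0 hR1]
  congr 1; ring

lemma sublevel_top {t : ℝ} (ht : 0 ≤ t) :
    volume {z ∈ ball (0 : Cn 2) 1 | u18 z < ((t : ℝ) : EReal)}
      = ENNReal.ofReal (Real.pi ^ 2 / 2) := by
  have h : {z ∈ ball (0 : Cn 2) 1 | u18 z < ((t : ℝ) : EReal)}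
      = {z : Cn 2 | ‖z‖ < 1 ∧ ‖(z 0)‖ < 1} := by
    ext z
    simp only [Set.mem_sep_iff, mem_ball, dist_zero_right, Set.mem_setOf_eq]
    constructor
    · rintro ⟨h1, _⟩
      exact ⟨h1, lt_of_le_of_lt (coord_le_norm z) h1⟩
    · rintro ⟨h1, h2⟩
      refine ⟨h1, ?_⟩
      by_cases hz : z 0 = 0
      · simp only [u18, if_pos hz]
        exact EReal.bot_lt_coe _
      · simp only [u18, if_neg hz, EReal.coe_lt_coe_iff]
        exact lt_of_lt_of_le (Real.log_neg (norm_pos_iff.mpr hz) h2) ht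
  rw [h, volAux one_pos le_rfl]
  congr 1; ring

lemma Fvol_neg {t : ℝ} (ht : t ≤ 0) :
    volume {z ∈ ball (0 : Cn 2) 1 | u18 z < ((t : ℝ) : EReal)}
      = ENNReal.ofReal (Real.pi ^ 2 * (Real.exp t ^ 2 - Real.exp t ^ 4 / 2)) := by
  have h := sublevel (R := Real.exp t) (Real.exp_pos t) (Real.exp_le_one_iff.2 ht)
  rwa [Real.log_exp] at h

lemma sInf_coe_Ioi (a : ℝ) :
    sInf ((fun t : ℝ => (t : EReal)) '' Set.Ioi a) = (a : EReal) := by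
  apply le_antisymm
  · apply le_of_forall_gt_imp_ge_of_dense
    intro c hc
    obtain ⟨y, hy1, hy2⟩ := EReal.exists_between_coe_real hc
    exact le_trans (sInf_le ⟨y, EReal.coe_lt_coe_iff.1 hy1, rfl⟩) hy2.le
  · apply le_sInf
    rintro x ⟨t, ht, rfl⟩
    exact EReal.coe_le_coe_iff.2 (le_of_lt ht)

lemma rearr_val {s : ℝ} (hs0 : 0 < s) (hs1 : s < Real.pi ^ 2 / 2) :
    rearrE u18 (ball (0 : Cn 2) 1) s
      = (((1/2) * Real.log (1 - Real.sqrt (1 - 2 * s / Real.pi ^ 2)) : ℝ) : EReal) := by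
  have hπ : (0:ℝ) < Real.pi ^ 2 := by positivity
  set c : ℝ := 2 * s / Real.pi ^ 2 with hc
  have hc0 : 0 < c := by positivity
  have hc1 : c < 1 := by rw [hc, div_lt_one hπ]; linarith
  set q : ℝ := Real.sqrt (1 - c) with hq
  have hq0 : 0 < q := Real.sqrt_pos.2 (by linarith)
  have hq1 : q < 1 := by
    have h := Real.sqrt_lt_sqrt (by linarith) (show (1:ℝ) - c < 1 by linarith)
    rwa [Real.sqrt_one] at h
  have hq2 : q ^ 2 = 1 - c := Real.sq_sqrt (by linarith)
  set a : ℝ := (1/2) * Real.log (1 - q) with ha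
  have hsc : s = Real.pi ^ 2 * c / 2 := by rw [hc]; field_simp
  have key : {t : ℝ | ENNReal.ofReal s
      < volume {x ∈ ball (0 : Cn 2) 1 | u18 x < ((t : ℝ) : EReal)}} = Set.Ioi a := by
    ext t
    simp only [Set.mem_setOf_eq, Set.mem_Ioi]
    rcases le_or_gt t 0 with htn | htp
    · rw [Fvol_neg htn]
      set X : ℝ := Real.exp t with hX
      have hX0 : 0 < X := Real.exp_pos t
      have hX1 : X ≤ 1 := Real.exp_le_one_iff.2 htn
      have hlogX : Real.log (X ^ 2) = 2 * t := by
        rw [Real.log_pow, hX, Real.log_exp]; push_cast; ring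
      constructor
      · intro h
        have h' : s < Real.pi ^ 2 * (X ^ 2 - X ^ 4 / 2) := by
          by_contra hcon
          push_neg at hcon
          exact absurd h (not_lt.2 (ENNReal.ofReal_le_ofReal hcon))
        have h2 : (1 - X ^ 2) ^ 2 < q ^ 2 := by nlinarith
        have hx : 1 - q < X ^ 2 := by nlinarith
        have := (Real.log_lt_log_iff (by linarith) (by positivity)).2 hx
        rw [hlogX] at this
        linarith [this]
      · intro h
        have h2 : Real.log (1 - q) < Real.log (X ^ 2) := by rw [hlogX]; linarith
        have hx : 1 - q < X ^ 2 := (Real.log_lt_log_iff (by linarith) (by positivity)).1 h2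
        have hprod := mul_pos (sub_pos.2 hx) (show (0:ℝ) < 2 - X ^ 2 - (1 - q) by nlinarith)
        have hy : c / 2 < X ^ 2 - X ^ 4 / 2 := by nlinarith [hprod]
        have h3 : s < Real.pi ^ 2 * (X ^ 2 - X ^ 4 / 2) := by
          rw [hsc]
          calc Real.pi ^ 2 * c / 2 = Real.pi ^ 2 * (c / 2) := by ring
            _ < Real.pi ^ 2 * (X ^ 2 - X ^ 4 / 2) := mul_lt_mul_of_pos_left hy hπ
        exact (ENNReal.ofReal_lt_ofReal_iff (by linarith)).2 h3
    · rw [sublevel_top htp.le]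
      have haneg : a < 0 := by
        have := Real.log_neg (by linarith : (0:ℝ) < 1 - q) (by linarith)
        rw [ha]; linarith
      constructor
      · intro _; linarith
      · intro _
        exact (ENNReal.ofReal_lt_ofReal_iff (by positivity)).2 hs1
  rw [rearrE, key, sInf_coe_Ioi]

def Gfun (ρ : ℝ) : ℝ := (1/2) * Real.log (1 - Real.sqrt (1 - ρ ^ 4))

lemma sqrt_lt_one' {x : ℝ} (hx0 : 0 < x) (hx1 : x ≤ 1) :
    Real.sqrt (1 - x) < 1 := by
  have h := Real.sqrt_lt_sqrt (by linarith) (show 1 - x < 1 by linarith)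
  rwa [Real.sqrt_one] at h

lemma schwarz_val {w : Cn 2} (h0 : 0 < ‖w‖) (h1 : ‖w‖ < 1) :
    schwarzE u18 (ball (0 : Cn 2) 1) w = ((Gfun ‖w‖ : ℝ) : EReal) := by
  have h4 : ‖w‖ ^ 4 < 1 := pow_lt_one₀ (norm_nonneg w) h1 (by norm_num)
  have hπ : (0:ℝ) < Real.pi ^ 2 := by positivity
  rw [schwarzE, ballVol h0, ENNReal.toReal_ofReal (by positivity),
    rearr_val (by positivity) (by nlinarith)]
  have he : 2 * (Real.pi ^ 2 * ‖w‖ ^ 4 / 2) / Real.pi ^ 2 = ‖w‖ ^ 4 := by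
    field_simp
  rw [he]
  rfl

lemma Gfun_mono {x y : ℝ} (hx : 0 < x) (hxy : x ≤ y) (hy : y < 1) : Gfun x ≤ Gfun y := by
  have hy0 : 0 < y := lt_of_lt_of_le hx hxy
  have hy4 : y ^ 4 < 1 := pow_lt_one₀ hy0.le hy (by norm_num)
  have hx4 : x ^ 4 ≤ y ^ 4 := pow_le_pow_left₀ hx.le hxy 4
  have h2 : 0 < 1 - Real.sqrt (1 - x ^ 4) := by
    have := sqrt_lt_one' (by positivity) (by nlinarith) (x := x ^ 4)
    linarith
  have h1 : Real.sqrt (1 - y ^ 4) ≤ Real.sqrt (1 - x ^ 4) :=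
    Real.sqrt_le_sqrt (by linarith)
  exact mul_le_mul_of_nonneg_left (Real.log_le_log h2 (by linarith)) (by norm_num)

lemma Gfun_neg {ρ : ℝ} (h0 : 0 < ρ) (h1 : ρ < 1) : Gfun ρ < 0 := by
  have h4 : ρ ^ 4 < 1 := pow_lt_one₀ h0.le h1 (by norm_num)
  have hs1 : Real.sqrt (1 - ρ ^ 4) < 1 := sqrt_lt_one' (by positivity) (by nlinarith)
  have hs0 : 0 < Real.sqrt (1 - ρ ^ 4) := Real.sqrt_pos.2 (by linarith)
  have := Real.log_neg (by linarith : (0:ℝ) < 1 - Real.sqrt (1 - ρ ^ 4)) (by linarith)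
  rw [Gfun]; linarith

lemma supGle {r : ℝ} (hr0 : 0 < r) (hr1 : r < 1) :
    (⨆ w ∈ ball (0 : Cn 2) r, schwarzE u18 (ball (0 : Cn 2) 1) w)
      ≤ ((Gfun r : ℝ) : EReal) := by
  apply iSup₂_le
  intro w hw
  rcases eq_or_ne w 0 with h | h
  · subst h
    have hb : ball (0 : Cn 2) ‖(0 : Cn 2)‖ = ∅ := by
      rw [norm_zero, ball_zero]
    rw [schwarzE, hb, measure_empty, ENNReal.toReal_zero, rearrE]
    apply sInf_le
    refine ⟨Gfun r, ?_, rfl⟩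
    have hGr : Gfun r < 0 := Gfun_neg hr0 hr1
    rw [Set.mem_setOf_eq, Fvol_neg hGr.le]
    have hX0 : 0 < Real.exp (Gfun r) := Real.exp_pos _
    have hX1 : Real.exp (Gfun r) ≤ 1 := Real.exp_le_one_iff.2 hGr.le
    rw [ENNReal.ofReal_zero]
    apply ENNReal.ofReal_pos.2
    have hπ : (0:ℝ) < Real.pi ^ 2 := by positivity
    have hX2 : Real.exp (Gfun r) ^ 2 ≤ 1 := by nlinarith
    have h4 := mul_nonneg (sq_nonneg (Real.exp (Gfun r)))
      (by linarith : (0:ℝ) ≤ 1 - Real.exp (Gfun r) ^ 2)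
    exact mul_pos hπ (by nlinarith)
  · have h0 : 0 < ‖w‖ := norm_pos_iff.2 h
    have hwr : ‖w‖ < r := mem_ball_zero_iff.1 hw
    rw [schwarz_val h0 (lt_trans hwr hr1)]
    exact EReal.coe_le_coe_iff.2 (Gfun_mono h0 hwr.le hr1)

lemma leGsup {r : ℝ} (hr0 : 0 < r) (hr1 : r < 1) :
    ((Gfun (r/2) : ℝ) : EReal)
      ≤ ⨆ w ∈ ball (0 : Cn 2) r, schwarzE u18 (ball (0 : Cn 2) 1) w := by
  set w : Cn 2 := (r/2 : ℝ) • EuclideanSpace.single (0 : Fin 2) (1 : ℂ) with hwdef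
  have hwn : ‖w‖ = r/2 := by
    rw [hwdef, norm_smul, EuclideanSpace.norm_single, norm_one, mul_one, Real.norm_eq_abs,
      abs_of_pos (show (0:ℝ) < r/2 by linarith)]
  have hmem : w ∈ ball (0 : Cn 2) r := mem_ball_zero_iff.2 (by rw [hwn]; linarith)
  have hle := le_iSup₂
    (f := fun (w : Cn 2) (_ : w ∈ ball (0 : Cn 2) r) => schwarzE u18 (ball (0 : Cn 2) 1) w)
    w hmem
  rw [schwarz_val (by rw [hwn]; linarith) (by rw [hwn]; linarith), hwn] at hle
  exact hle

lemma G_identity {ρ : ℝ} (h0 : 0 < ρ) (h1 : ρ < 1) :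
    Gfun ρ = 2 * Real.log ρ - (1/2) * Real.log (1 + Real.sqrt (1 - ρ ^ 4)) := by
  have hρ4 : ρ ^ 4 < 1 := pow_lt_one₀ h0.le h1 (by norm_num)
  set q := Real.sqrt (1 - ρ ^ 4) with hq
  have hq0 : 0 < q := Real.sqrt_pos.2 (by linarith)
  have hq2 : q ^ 2 = 1 - ρ ^ 4 := Real.sq_sqrt (by linarith)
  have key : 1 - q = ρ ^ 4 / (1 + q) := by
    rw [eq_div_iff (by positivity)]
    nlinarith
  rw [Gfun, key, Real.log_div (by positivity) (by positivity), Real.log_pow]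
  push_cast
  ring

lemma tendsto_G {c : ℝ} (hc0 : 0 < c) (hc1 : c ≤ 1) :
    Tendsto (fun r => Gfun (c * r) / Real.log r) (𝓝[>] (0:ℝ)) (𝓝 2) := by
  have hlog : Tendsto Real.log (𝓝[>] (0:ℝ)) atBot := Real.tendsto_log_nhdsGT_zero
  set h : ℝ → ℝ := fun r => 2 * Real.log c - (1/2) * Real.log (1 + Real.sqrt (1 - (c*r)^4))
    with hh
  have hcont : Tendsto h (𝓝[>] (0:ℝ)) (𝓝 (2 * Real.log c - (1/2) * Real.log 2)) := by
    have hg : Continuous fun r : ℝ => 1 + Real.sqrt (1 - (c*r)^4) := by fun_prop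
    have hne : (1:ℝ) + Real.sqrt (1 - (c*0)^4) ≠ 0 := by norm_num [Real.sqrt_one]
    have hlogcont : ContinuousAt (fun r : ℝ => Real.log (1 + Real.sqrt (1 - (c*r)^4))) 0 :=
      ContinuousAt.comp (f := fun r : ℝ => 1 + Real.sqrt (1 - (c*r)^4)) (g := Real.log)
        (x := (0:ℝ)) (Real.continuousAt_log hne) hg.continuousAt
    have hca : ContinuousAt h 0 := by
      apply ContinuousAt.sub continuousAt_const
      exact continuousAt_const.mul hlogcont
    have := hca.tendsto
    have hh0 : h 0 = 2 * Real.log c - (1/2) * Real.log 2 := by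
      rw [hh]
      norm_num [Real.sqrt_one]
    rw [hh0] at this
    exact tendsto_nhdsWithin_of_tendsto_nhds this
  have hdiv : Tendsto (fun r => h r / Real.log r) (𝓝[>] (0:ℝ)) (𝓝 0) := by
    have hneg : Tendsto (fun r : ℝ => -Real.log r) (𝓝[>] (0:ℝ)) atTop :=
      tendsto_neg_atBot_atTop.comp hlog
    have h2 : Tendsto (fun r => h r / (-Real.log r)) (𝓝[>] (0:ℝ)) (𝓝 0) :=
      hcont.div_atTop hneg
    have h3 := h2.neg
    rw [neg_zero] at h3
    refine h3.congr fun r => ?_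
    rw [div_neg, neg_neg]
  have final : Tendsto (fun r => 2 + h r / Real.log r) (𝓝[>] (0:ℝ)) (𝓝 2) := by
    have := (tendsto_const_nhds (α := ℝ) (x := (2:ℝ)) (f := 𝓝[>] (0:ℝ))).add hdiv
    simpa using this
  refine final.congr' ?_
  filter_upwards [Ioo_mem_nhdsGT_of_mem (Set.left_mem_Ico.2 one_pos)] with r hr
  have hr0 : 0 < r := hr.1
  have hr1 : r < 1 := hr.2
  have hcr0 : 0 < c * r := by positivity
  have hcr1 : c * r < 1 := by nlinarith
  have hlid : Gfun (c * r) = 2 * Real.log r + h r := by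
    rw [G_identity hcr0 hcr1, Real.log_mul (ne_of_gt hc0) (ne_of_gt hr0), hh]
    ring
  have hlr : Real.log r ≠ 0 := ne_of_lt (Real.log_neg hr0 hr1)
  rw [hlid, add_div, mul_div_assoc, div_self hlr, mul_one]

lemma lelong_val : lelong (schwarzE u18 (ball (0 : Cn 2) 1)) 0 = 2 := by
  rw [lelong]
  apply Tendsto.liminf_eq
  have hlow := tendsto_G (c := 1) one_pos le_rfl
  have hup := tendsto_G (c := 1/2) (by norm_num) (by norm_num)
  refine tendsto_of_tendsto_of_tendsto_of_le_of_le' hlow hup ?_ ?_ <;>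
    filter_upwards [Ioo_mem_nhdsGT_of_mem (Set.left_mem_Ico.2 one_pos)] with r hr <;>
    · have hr0 : 0 < r := hr.1
      have hr1 : r < 1 := hr.2
      have hub := supGle hr0 hr1
      have hlb := leGsup hr0 hr1
      have hSnb : (⨆ w ∈ ball (0 : Cn 2) r, schwarzE u18 (ball (0 : Cn 2) 1) w) ≠ ⊥ :=
        (lt_of_lt_of_le (EReal.bot_lt_coe _) hlb).ne'
      have hSnt : (⨆ w ∈ ball (0 : Cn 2) r, schwarzE u18 (ball (0 : Cn 2) 1) w) ≠ ⊤ :=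
        ne_top_of_le_ne_top (EReal.coe_ne_top _) hub
      have hu' := EReal.toReal_le_toReal hub hSnb (EReal.coe_ne_top _)
      have hl' := EReal.toReal_le_toReal hlb (EReal.coe_ne_bot _) hSnt
      rw [EReal.toReal_coe] at hu' hl'
      have hlogneg : Real.log r < 0 := Real.log_neg hr0 hr1
      first
      | · rw [one_mul]
          exact (div_le_div_right_of_neg hlogneg).2 hu'
      | · rw [show (1/2 : ℝ) * r = r / 2 by ring]
          exact (div_le_div_right_of_neg hlogneg).2 hl'

lemma lim2 : Tendsto (fun R : ℝ => 4 * Real.log R / (Real.log (R ^ 2 - R ^ 4 / 2) + Real.log 2))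
    (𝓝[>] (0 : ℝ)) (𝓝 2) := by
  have hlog : Tendsto Real.log (𝓝[>] (0:ℝ)) atBot := Real.tendsto_log_nhdsGT_zero
  set h : ℝ → ℝ := fun R => Real.log (1 - R^2/2) + Real.log 2 with hh
  have hcont : Tendsto h (𝓝[>] (0:ℝ)) (𝓝 (Real.log 2)) := by
    have hg : Continuous fun R : ℝ => 1 - R^2/2 := by fun_prop
    have hca : ContinuousAt h 0 := by
      apply ContinuousAt.add ?_ continuousAt_const
      have hne : (1:ℝ) - 0^2/2 ≠ 0 := by norm_num
      exact ContinuousAt.comp (f := fun R : ℝ => 1 - R^2/2) (g := Real.log) (x := (0:ℝ))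
        (Real.continuousAt_log hne) hg.continuousAt
    have := hca.tendsto
    have hh0 : h 0 = Real.log 2 := by rw [hh]; norm_num
    rw [hh0] at this
    exact tendsto_nhdsWithin_of_tendsto_nhds this
  have hdiv : Tendsto (fun R => h R / Real.log R) (𝓝[>] (0:ℝ)) (𝓝 0) := by
    have hneg : Tendsto (fun r : ℝ => -Real.log r) (𝓝[>] (0:ℝ)) atTop :=
      tendsto_neg_atBot_atTop.comp hlog
    have h2 : Tendsto (fun r => h r / (-Real.log r)) (𝓝[>] (0:ℝ)) (𝓝 0) :=
      hcont.div_atTop hneg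
    have h3 := h2.neg
    rw [neg_zero] at h3
    refine h3.congr fun r => ?_
    rw [div_neg, neg_neg]
  have final : Tendsto (fun R => 4 / (2 + h R / Real.log R)) (𝓝[>] (0:ℝ)) (𝓝 2) := by
    have hden : Tendsto (fun R => 2 + h R / Real.log R) (𝓝[>] (0:ℝ)) (𝓝 2) := by
      have := (tendsto_const_nhds (α := ℝ) (x := (2:ℝ)) (f := 𝓝[>] (0:ℝ))).add hdiv
      simpa using this
    have hT := Filter.Tendsto.div
      (f := fun _ : ℝ => (4:ℝ)) (g := fun R => 2 + h R / Real.log R)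
      tendsto_const_nhds hden (by norm_num)
    have h42 : (4:ℝ) / 2 = 2 := by norm_num
    rw [h42] at hT
    exact hT.congr fun R => rfl
  refine final.congr' ?_
  filter_upwards [Ioo_mem_nhdsGT_of_mem (Set.left_mem_Ico.2 one_pos)] with R hr
  have hr0 : 0 < R := hr.1
  have hr1 : R < 1 := hr.2
  have hlr : Real.log R ≠ 0 := ne_of_lt (Real.log_neg hr0 hr1)
  have e2 : Real.log (R^2 - R^4/2) = 2 * Real.log R + Real.log (1 - R^2/2) := by
    rw [show R^2 - R^4/2 = R^2 * (1 - R^2/2) by ring,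
      Real.log_mul (by positivity) (by nlinarith), Real.log_pow]
    push_cast
    ring
  have e1 : 2 + h R / Real.log R = (2 * Real.log R + h R) / Real.log R := by
    field_simp
  rw [e1, div_div_eq_mul_div, e2, hh]
  ring_nf

/-- for `u(z) = log|z₁|` on the unit ball of `ℂ²`, the sublevel sets have
volume `π²(R² − R⁴/2)`, the displayed limit equals `2`, and consequently the Lelong number
of the Schwarz symmetrization at the origin equals `2`. -/
theorem stmt18 :
    (∀ R : ℝ, 0 < R → R < 1 →
      volume {z ∈ ball (0 : Cn 2) 1 | u18 z < ((Real.log R : ℝ) : EReal)}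
        = ENNReal.ofReal (Real.pi ^ 2 * (R ^ 2 - R ^ 4 / 2))) ∧
    Tendsto (fun R : ℝ => 4 * Real.log R / (Real.log (R ^ 2 - R ^ 4 / 2) + Real.log 2))
      (𝓝[>] (0 : ℝ)) (𝓝 2) ∧
    lelong (schwarzE u18 (ball (0 : Cn 2) 1)) 0 = 2 := by
  exact ⟨fun R h1 h2 => sublevel h1 h2.le, lim2, lelong_val⟩

end
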